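/- For a symmetric trace-free operator T on an m-dimensional inner product space, |tr(T^3)| ≤ ((m-2)/√(m(m-1)))·|T|^3, with equality only if either all eigenvalues vanish or (up to permutation and sign) λ_1=...=λ_{m-1} = -|T|/√(m(m-1)) and λ_m = √((m-1)/m)·|T|. -/

import Mathlib

open Finset

section
variable {n : ℕ}

lemma pointwise_bound (hn : 2 ≤ n) (x : Fin n → ℝ) (h0 : ∑ i, x i = 0)
    (i : Fin n) : (n : ℝ) * x i ^ 2 ≤ ((n : ℝ) - 1) * ∑ j, x j ^ 2 := by
  have h1 : x i + ∑ j ∈ univ.erase i, x j = 0 := by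
    rw [Finset.add_sum_erase _ _ (mem_univ i)]; exact h0
  have h2 : (∑ j ∈ univ.erase i, x j) ^ 2 ≤ (#(univ.erase i) : ℝ) * ∑ j ∈ univ.erase i, x j ^ 2 :=
    sq_sum_le_card_mul_sum_sq
  have hcard : (#(univ.erase i) : ℝ) = (n : ℝ) - 1 := by
    rw [Finset.card_erase_of_mem (mem_univ i)]
    simp [Nat.cast_sub (by omega : 1 ≤ n)]
  have h3 : ∑ j ∈ univ.erase i, x j ^ 2 = (∑ j, x j ^ 2) - x i ^ 2 := by
    rw [Finset.sum_erase_eq_sub (mem_univ i)]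
  have h4 : (x i) ^ 2 ≤ ((n : ℝ) - 1) * ((∑ j, x j ^ 2) - x i ^ 2) := by
    have : (∑ j ∈ univ.erase i, x j) = -x i := by linarith
    rw [this] at h2; rw [hcard, h3] at h2; simpa using h2
  nlinarith

lemma term_nonpos (hn : 2 ≤ n) (x : Fin n → ℝ) (h0 : ∑ i, x i = 0) (i : Fin n) :
    (x i + Real.sqrt (∑ j, x j ^ 2) / Real.sqrt (n * ((n : ℝ) - 1))) ^ 2 *
        (x i - ((n : ℝ) - 1) * Real.sqrt (∑ j, x j ^ 2) / Real.sqrt (n * ((n : ℝ) - 1))) ≤ 0 := by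
  have hn' : (2:ℝ) ≤ n := by exact_mod_cast hn
  set Q := ∑ j, x j ^ 2 with hQ
  set s := Real.sqrt Q with hs
  set r := Real.sqrt (n * ((n : ℝ) - 1)) with hr
  have hrpos : 0 < r := Real.sqrt_pos.2 (by nlinarith)
  have hr2 : r ^ 2 = n * ((n : ℝ) - 1) := Real.sq_sqrt (by nlinarith)
  have hs0 : 0 ≤ s := Real.sqrt_nonneg _
  have hs2 : s ^ 2 = Q := Real.sq_sqrt (Finset.sum_nonneg fun i _ => sq_nonneg _)
  have hpb := pointwise_bound hn x h0 i
  rw [← hQ, ← hs2] at hpb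
  -- x i ≤ (n-1) * s / r
  have hnn : (0:ℝ) < (n:ℝ) := by linarith
  have hnm : (0:ℝ) < (n:ℝ) * ((n:ℝ) - 1) := by nlinarith
  have hβ2 : (((n : ℝ) - 1) * s / r) ^ 2 = ((n:ℝ) - 1) * s ^ 2 / n := by
    rw [div_pow, hr2]
    field_simp [ne_of_gt hnn, ne_of_gt hnm]
  have hβ0 : 0 ≤ ((n : ℝ) - 1) * s / r :=
    div_nonneg (mul_nonneg (by linarith) hs0) hrpos.le
  have hx2 : x i ^ 2 ≤ (((n : ℝ) - 1) * s / r) ^ 2 := by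
    rw [hβ2, le_div_iff₀ hnn]; nlinarith
  have hle : x i ≤ ((n : ℝ) - 1) * s / r := by
    calc x i ≤ |x i| := le_abs_self _
      _ = Real.sqrt (x i ^ 2) := (Real.sqrt_sq_eq_abs _).symm
      _ ≤ Real.sqrt ((((n : ℝ) - 1) * s / r) ^ 2) := Real.sqrt_le_sqrt hx2
      _ = ((n : ℝ) - 1) * s / r := Real.sqrt_sq hβ0
  have := sq_nonneg (x i + s / r)
  nlinarith [this, hle]

lemma key_decomp (hn : 2 ≤ n) (x : Fin n → ℝ) (h0 : ∑ i, x i = 0) :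
    ∑ i, (x i + Real.sqrt (∑ j, x j ^ 2) / Real.sqrt (n * ((n : ℝ) - 1))) ^ 2 *
        (x i - ((n : ℝ) - 1) * Real.sqrt (∑ j, x j ^ 2) / Real.sqrt (n * ((n : ℝ) - 1)))
      = (∑ i, x i ^ 3) -
        (((n : ℝ) - 2) / Real.sqrt (n * ((n : ℝ) - 1))) * (Real.sqrt (∑ j, x j ^ 2)) ^ 3 := by
  set Q := ∑ j, x j ^ 2 with hQ
  set s := Real.sqrt Q with hs
  set r := Real.sqrt (n * ((n : ℝ) - 1)) with hr
  have hrpos : 0 < r := Real.sqrt_pos.2 (by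
    have : (2:ℝ) ≤ n := by exact_mod_cast hn
    nlinarith)
  have hr2 : r ^ 2 = n * ((n : ℝ) - 1) := Real.sq_sqrt (by
    have : (2:ℝ) ≤ n := by exact_mod_cast hn
    nlinarith)
  have hs2 : s ^ 2 = Q := Real.sq_sqrt (Finset.sum_nonneg fun i _ => sq_nonneg _)
  set α := s / r with hα
  set β := ((n : ℝ) - 1) * s / r with hβ
  have expand : ∀ i, (x i + α) ^ 2 * (x i - β)
      = x i ^ 3 + (2 * α - β) * x i ^ 2 + (α ^ 2 - 2 * α * β) * x i - α ^ 2 * β := by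
    intro i; ring
  rw [Finset.sum_congr rfl fun i _ => expand i]
  rw [show ∀ f g h k : Fin n → ℝ, (∑ i, (f i + g i + h i - k i))
      = (∑ i, f i) + (∑ i, g i) + (∑ i, h i) - (∑ i, k i) from
    fun f g h k => by rw [Finset.sum_sub_distrib, Finset.sum_add_distrib, Finset.sum_add_distrib]]
  rw [← Finset.mul_sum, ← Finset.mul_sum, h0, ← hQ, Finset.sum_const, Finset.card_univ,
    Fintype.card_fin, nsmul_eq_mul]
  have key : (2 * α - β) * Q - (n : ℝ) * (α ^ 2 * β)
      = -((((n : ℝ) - 2) / r) * s ^ 3) := by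
    rw [hα, hβ, ← hs2]
    field_simp
    linear_combination s ^ 3 * hr2
  linarith [key]

lemma key_le (hn : 2 ≤ n) (x : Fin n → ℝ) (h0 : ∑ i, x i = 0) :
    ∑ i, x i ^ 3 ≤
      (((n : ℝ) - 2) / Real.sqrt (n * ((n : ℝ) - 1))) * (Real.sqrt (∑ j, x j ^ 2)) ^ 3 := by
  have hd := key_decomp hn x h0
  have hnp : ∑ i, (x i + Real.sqrt (∑ j, x j ^ 2) / Real.sqrt (n * ((n : ℝ) - 1))) ^ 2 *
      (x i - ((n : ℝ) - 1) * Real.sqrt (∑ j, x j ^ 2) / Real.sqrt (n * ((n : ℝ) - 1))) ≤ 0 :=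
    Finset.sum_nonpos fun i _ => term_nonpos hn x h0 i
  linarith

lemma key_eq (hn : 2 ≤ n) (x : Fin n → ℝ) (h0 : ∑ i, x i = 0)
    (hQ : ∑ j, x j ^ 2 ≠ 0)
    (heq : ∑ i, x i ^ 3 =
      (((n : ℝ) - 2) / Real.sqrt (n * ((n : ℝ) - 1))) * (Real.sqrt (∑ j, x j ^ 2)) ^ 3) :
    ∃ i₀ : Fin n,
      (∀ i, i ≠ i₀ → x i =
        -(1 / Real.sqrt (n * ((n : ℝ) - 1))) * Real.sqrt (∑ j, x j ^ 2)) ∧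
      x i₀ = (((n : ℝ) - 1) / Real.sqrt (n * ((n : ℝ) - 1))) * Real.sqrt (∑ j, x j ^ 2) := by
  have hn' : (2:ℝ) ≤ n := by exact_mod_cast hn
  have hd := key_decomp hn x h0
  rw [heq, sub_self] at hd
  set Q := ∑ j, x j ^ 2 with hQdef
  set s := Real.sqrt Q with hs
  set r := Real.sqrt (n * ((n : ℝ) - 1)) with hr
  have hrpos : 0 < r := Real.sqrt_pos.2 (by nlinarith)
  have hspos : 0 < s := Real.sqrt_pos.2 (lt_of_le_of_ne (Finset.sum_nonneg fun i _ => sq_nonneg _) (Ne.symm hQ))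
  -- every term is zero
  have hzero : ∀ i ∈ Finset.univ, (x i + s / r) ^ 2 * (x i - ((n : ℝ) - 1) * s / r) = 0 := by
    rw [← Finset.sum_eq_zero_iff_of_nonpos (fun i _ => term_nonpos hn x h0 i)]
    exact hd
  have hval : ∀ i, x i = -(s / r) ∨ x i = ((n : ℝ) - 1) * s / r := by
    intro i
    rcases mul_eq_zero.1 (hzero i (mem_univ i)) with h | h
    · left; have := pow_eq_zero_iff (n := 2) (by norm_num) |>.1 h; linarith
    · right; linarith
  classical
  set A := Finset.univ.filter (fun i : Fin n => x i = ((n : ℝ) - 1) * s / r) with hA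
  have hcard : A.card + (Finset.univ.filter (fun i : Fin n => ¬ x i = ((n : ℝ) - 1) * s / r)).card = n := by
    rw [Finset.card_filter_add_card_filter_not]
    exact Finset.card_fin n
  have hsum : (0:ℝ) = (A.card : ℝ) * (((n : ℝ) - 1) * s / r)
      + ((n : ℝ) - A.card) * (-(s / r)) := by
    rw [← h0, ← Finset.sum_filter_add_sum_filter_not Finset.univ
      (fun i : Fin n => x i = ((n : ℝ) - 1) * s / r)]
    congr 1
    · rw [Finset.sum_congr rfl (fun i hi => (Finset.mem_filter.1 hi).2), Finset.sum_const,
        nsmul_eq_mul]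
    · rw [Finset.sum_congr rfl (fun i hi => ?_), Finset.sum_const, nsmul_eq_mul]
      · congr 1
        have h2 : ((A.card : ℝ)) + ((Finset.univ.filter
            (fun i : Fin n => ¬ x i = ((n : ℝ) - 1) * s / r)).card : ℝ) = (n : ℝ) := by
          exact_mod_cast hcard
        have h3 : ((Finset.univ.filter (fun i : Fin n => ¬ x i = ((n : ℝ) - 1) * s / r)).card : ℝ)
            = (n : ℝ) - A.card := by linarith
        rw [h3]
      · rcases hval i with h | h
        · exact h
        · exact absurd h (Finset.mem_filter.1 hi).2
  have hAcard : A.card = 1 := by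
    have hsr : 0 < s / r := div_pos hspos hrpos
    have : (A.card : ℝ) * (n : ℝ) = (n : ℝ) := by
      have h := hsum
      field_simp at h
      nlinarith [h, hsr, sq_nonneg ((A.card : ℝ) - 1)]
    have hn0 : (n:ℝ) ≠ 0 := by positivity
    have h1 : (A.card : ℝ) = 1 :=
      mul_right_cancel₀ hn0 (this.trans (one_mul (n:ℝ)).symm)
    exact Nat.cast_injective (by rw [h1]; norm_num)
  obtain ⟨i₀, hi₀⟩ := Finset.card_eq_one.1 hAcard
  refine ⟨i₀, fun i hi => ?_, ?_⟩
  · rcases hval i with h | h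
    · rw [h]; ring
    · exfalso; apply hi
      have : i ∈ A := Finset.mem_filter.2 ⟨mem_univ i, h⟩
      rw [hi₀, Finset.mem_singleton] at this; exact this
  · have : i₀ ∈ A := by rw [hi₀]; exact Finset.mem_singleton_self i₀
    have h := (Finset.mem_filter.1 this).2
    rw [h]; ring

end

lemma sqrt_ratio {n : ℕ} (hn : 2 ≤ n) :
    Real.sqrt (((n : ℝ) - 1) / n) = ((n : ℝ) - 1) / Real.sqrt (n * ((n : ℝ) - 1)) := by
  have hn' : (2:ℝ) ≤ n := by exact_mod_cast hn
  have hpos : (0:ℝ) < (n:ℝ) * ((n:ℝ) - 1) := by nlinarith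
  have hnn : (0:ℝ) < (n:ℝ) := by linarith
  have h : (((n:ℝ) - 1) / Real.sqrt ((n:ℝ) * ((n:ℝ) - 1))) ^ 2 = ((n:ℝ) - 1) / n := by
    rw [div_pow, Real.sq_sqrt hpos.le]
    field_simp [ne_of_gt hnn, ne_of_gt hpos]
  rw [← h, Real.sqrt_sq (div_nonneg (by linarith) (Real.sqrt_nonneg _))]

lemma sum_eig {m : ℕ} {T : Matrix (Fin m) (Fin m) ℝ} (hT : T.IsHermitian) :
    ∑ i, hT.eigenvalues i = T.trace := by
  have h := congrArg Matrix.trace hT.spectral_theorem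
  rw [Unitary.conjStarAlgAut_apply, Matrix.trace_mul_comm, ← mul_assoc, Unitary.coe_star_mul_self, one_mul,
    Matrix.trace_diagonal] at h
  simpa using h.symm

/-- For a symmetric trace-free operator `T` on an `m`-dimensional inner product space,
`|tr T³| ≤ ((m-2)/√(m(m-1))) |T|³`, with equality only if either all eigenvalues
vanish or, up to permutation and sign, `λ₁ = ⋯ = λ_{m-1} = -|T|/√(m(m-1))` and
`λ_m = √((m-1)/m)·|T|`. -/
theorem stmt1 (m : ℕ) (T : Matrix (Fin m) (Fin m) ℝ) (hT : T.IsHermitian)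
    (htr : T.trace = 0) :
    |∑ i, (hT.eigenvalues i) ^ 3| ≤
      (((m : ℝ) - 2) / Real.sqrt ((m : ℝ) * ((m : ℝ) - 1))) *
        (Real.sqrt (∑ i, (hT.eigenvalues i) ^ 2)) ^ 3 ∧
    (|∑ i, (hT.eigenvalues i) ^ 3| =
        (((m : ℝ) - 2) / Real.sqrt ((m : ℝ) * ((m : ℝ) - 1))) *
          (Real.sqrt (∑ i, (hT.eigenvalues i) ^ 2)) ^ 3 →
      (∀ i, hT.eigenvalues i = 0) ∨
      ∃ ε : ℝ, (ε = 1 ∨ ε = -1) ∧ ∃ σ : Equiv.Perm (Fin m), ∃ i₀ : Fin m,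
        (∀ i, i ≠ i₀ → ε * hT.eigenvalues (σ i) =
          -(1 / Real.sqrt ((m : ℝ) * ((m : ℝ) - 1))) *
            Real.sqrt (∑ j, (hT.eigenvalues j) ^ 2)) ∧
        ε * hT.eigenvalues (σ i₀) =
          Real.sqrt (((m : ℝ) - 1) / m) * Real.sqrt (∑ j, (hT.eigenvalues j) ^ 2)) := by
  set x := hT.eigenvalues with hx
  have h0 : ∑ i, x i = 0 := by rw [hx, sum_eig hT, htr]
  rcases lt_or_ge m 2 with hm | hm
  · -- m ≤ 1 : all eigenvalues vanish
    have hall : ∀ i : Fin m, x i = 0 := by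
      intro i
      have hpos : 0 < m := i.pos
      have hm1 : m = 1 := by omega
      subst hm1
      have : x i = ∑ j, x j := by rw [Fin.sum_univ_one, Subsingleton.elim i 0]
      rw [this, h0]
    have h3 : ∑ i, x i ^ 3 = 0 := by simp [hall]
    have h2 : ∑ i, x i ^ 2 = 0 := by simp [hall]
    refine ⟨?_, fun _ => Or.inl hall⟩
    rw [h3, h2]
    simp
  · -- main case m ≥ 2
    have hm' : (2:ℝ) ≤ m := by exact_mod_cast hm
    have hub := key_le hm x h0
    have hy2 : ∑ j, (-x j) ^ 2 = ∑ j, x j ^ 2 :=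
      Finset.sum_congr rfl fun i _ => by ring
    have hy3 : ∑ j, (-x j) ^ 3 = -∑ j, x j ^ 3 := by
      rw [← Finset.sum_neg_distrib]
      exact Finset.sum_congr rfl fun i _ => by ring
    have hy0 : ∑ i, (-x i) = 0 := by rw [Finset.sum_neg_distrib, h0, neg_zero]
    have hlb := key_le hm (fun i => -x i) hy0
    rw [hy3, hy2] at hlb
    constructor
    · rw [abs_le]; exact ⟨by linarith, hub⟩
    · intro heq
      by_cases hQ : ∑ j, x j ^ 2 = 0
      · left
        intro i
        have := (Finset.sum_eq_zero_iff_of_nonneg (fun i _ => sq_nonneg (x i))).1 hQ i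
          (Finset.mem_univ i)
        exact pow_eq_zero_iff two_ne_zero |>.1 this
      · right
        have hC : 0 ≤ (((m : ℝ) - 2) / Real.sqrt ((m : ℝ) * ((m : ℝ) - 1))) *
            (Real.sqrt (∑ i, x i ^ 2)) ^ 3 :=
          mul_nonneg (div_nonneg (by linarith) (Real.sqrt_nonneg _))
            (pow_nonneg (Real.sqrt_nonneg _) 3)
        rcases (abs_eq hC).1 heq with h | h
        · obtain ⟨i₀, hne, hi₀⟩ := key_eq hm x h0 hQ h
          refine ⟨1, Or.inl rfl, Equiv.refl _, i₀, fun i hi => ?_, ?_⟩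
          · simpa using hne i hi
          · rw [sqrt_ratio hm]
            simpa [div_mul_eq_mul_div] using hi₀
        · have h' : ∑ i, (-x i) ^ 3 =
              (((m : ℝ) - 2) / Real.sqrt ((m : ℝ) * ((m : ℝ) - 1))) *
                (Real.sqrt (∑ j, (-x j) ^ 2)) ^ 3 := by
            rw [hy3, hy2, h]; ring
          obtain ⟨i₀, hne, hi₀⟩ := key_eq hm (fun i => -x i) hy0 (by rwa [hy2]) h'
          rw [hy2] at hne hi₀
          refine ⟨-1, Or.inr rfl, Equiv.refl _, i₀, fun i hi => ?_, ?_⟩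
          · have := hne i hi
            simpa [neg_mul, one_mul] using this
          · rw [sqrt_ratio hm]
            simpa [neg_one_mul, div_mul_eq_mul_div] using hi₀
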